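/- For the toy 3×3 model with edge probability matrix P having rows (1, b, b²), (b², 1, b), (b, b², 1) and A_{ij} = 𝟙(i~j)/deg(j), the individual constant for agent 1 with K_j = 1 equals C¹_ind(b) = 1 + b(2^{1−α} − 1) + b²(2^{1−α} − 1) + b³(3^{1−α} + 1 − 2^{2−α}); moreover this function of b ∈ [0,1] is monotone decreasing on [0,1] if α > 1 and monotone increasing if α < 1. -/

import Mathlib

open MeasureTheory ProbabilityTheory Filter Real

lemma exp_triple {Ω : Type*} [MeasurableSpace Ω] (μ : Measure Ω) [IsFiniteMeasure μ]
    (X Y Z : Ω → Bool) (hX : Measurable X) (hY : Measurable Y) (hZ : Measurable Z)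
    (hmul : ∀ s0 s1 s2 : Set Bool,
      μ (X ⁻¹' s0 ∩ Y ⁻¹' s1 ∩ Z ⁻¹' s2) = μ (X ⁻¹' s0) * μ (Y ⁻¹' s1) * μ (Z ⁻¹' s2))
    (g : Bool → Bool → Bool → ℝ) :
    ∫ ω, g (X ω) (Y ω) (Z ω) ∂μ
      = ∑ p : Bool × Bool × Bool, g p.1 p.2.1 p.2.2 *
          ((μ (X ⁻¹' {p.1})).toReal * (μ (Y ⁻¹' {p.2.1})).toReal * (μ (Z ⁻¹' {p.2.2})).toReal) := by
  have hms : ∀ p : Bool × Bool × Bool,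
      MeasurableSet (X ⁻¹' {p.1} ∩ Y ⁻¹' {p.2.1} ∩ Z ⁻¹' {p.2.2}) := fun p =>
    ((hX (measurableSet_singleton _)).inter (hY (measurableSet_singleton _))).inter
      (hZ (measurableSet_singleton _))
  have hpt : ∀ ω, g (X ω) (Y ω) (Z ω)
      = ∑ p : Bool × Bool × Bool,
          Set.indicator (X ⁻¹' {p.1} ∩ Y ⁻¹' {p.2.1} ∩ Z ⁻¹' {p.2.2})
            (fun _ => g p.1 p.2.1 p.2.2) ω := by
    intro ω
    rcases hx : X ω <;> rcases hy : Y ω <;> rcases hz : Z ω <;>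
      simp [Fintype.sum_prod_type, Set.indicator_apply, hx, hy, hz]
  simp only [hpt]
  rw [integral_finset_sum _ (fun p _ => (integrable_const _).indicator (hms p))]
  refine Finset.sum_congr rfl fun p _ => ?_
  rw [integral_indicator_const _ (hms p), measureReal_def, hmul, smul_eq_mul, ENNReal.toReal_mul,
    ENNReal.toReal_mul]
  ring

lemma meas_inter3 {Ω : Type*} [MeasurableSpace Ω] {μ : Measure Ω}
    {E : Fin 3 → Fin 3 → Ω → Bool}
    (hindep : iIndepFun (fun (pr : Fin 3 × Fin 3) ω => E pr.1 pr.2 ω) μ)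
    (j : Fin 3) (s0 s1 s2 : Set Bool) :
    μ (E 0 j ⁻¹' s0 ∩ E 1 j ⁻¹' s1 ∩ E 2 j ⁻¹' s2)
      = μ (E 0 j ⁻¹' s0) * μ (E 1 j ⁻¹' s1) * μ (E 2 j ⁻¹' s2) := by
  have h := iIndepFun_iff_measure_inter_preimage_eq_mul.mp hindep
    ({((0:Fin 3), j), ((1:Fin 3), j), ((2:Fin 3), j)} : Finset (Fin 3 × Fin 3))
    (sets := fun pr => if pr.1 = 0 then s0 else if pr.1 = 1 then s1 else s2)
    (fun i _ => (Set.toFinite _).measurableSet)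
  have h01 : ((0:Fin 3), j) ≠ ((1:Fin 3), j) := by simp
  have h02 : ((0:Fin 3), j) ≠ ((2:Fin 3), j) := by simp
  have h12 : ((1:Fin 3), j) ≠ ((2:Fin 3), j) := by simp
  simp only [Finset.set_biInter_insert, Finset.set_biInter_singleton,
    Finset.prod_insert (by simp [h01, h02] : ((0:Fin 3), j) ∉ ({((1:Fin 3), j), ((2:Fin 3), j)} : Finset (Fin 3 × Fin 3))),
    Finset.prod_insert (by simp [h12] : ((1:Fin 3), j) ∉ ({((2:Fin 3), j)} : Finset (Fin 3 × Fin 3))),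
    Finset.prod_singleton] at h
  rw [if_neg (by decide : ¬((2:Fin 3) = 0)), if_neg (by decide : ¬((2:Fin 3) = 1))] at h
  norm_num at h
  rw [Set.inter_assoc, h, mul_assoc]
theorem stmt_15 {Ω : Type*} [MeasurableSpace Ω] (μ : Measure Ω) [IsProbabilityMeasure μ]
    (b : ℝ) (hb : b ∈ Set.Icc (0 : ℝ) 1)
    (E : Fin 3 → Fin 3 → Ω → Bool) (hEmeas : ∀ i j, Measurable (E i j))
    (hindep : iIndepFun (fun (pr : Fin 3 × Fin 3) ω => E pr.1 pr.2 ω) μ)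
    (hp : ∀ i j, (μ {ω | E i j ω = true}).toReal
      = ![![1, b, b ^ 2], ![b ^ 2, 1, b], ![b, b ^ 2, 1]] i j)
    (deg : Ω → Fin 3 → ℕ)
    (hdeg : ∀ ω j, deg ω j = ∑ i, if E i j ω then 1 else 0)
    (α : ℝ) (hα : 0 < α) :
    (∑ j, ∫ ω, (if E 0 j ω then ((deg ω j : ℝ))⁻¹ else 0) ^ α ∂μ
        = 1 + b * ((2 : ℝ) ^ (1 - α) - 1) + b ^ 2 * ((2 : ℝ) ^ (1 - α) - 1)
          + b ^ 3 * ((3 : ℝ) ^ (1 - α) + 1 - (2 : ℝ) ^ (2 - α))) ∧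
    (1 < α → AntitoneOn
      (fun c : ℝ => 1 + c * ((2 : ℝ) ^ (1 - α) - 1) + c ^ 2 * ((2 : ℝ) ^ (1 - α) - 1)
        + c ^ 3 * ((3 : ℝ) ^ (1 - α) + 1 - (2 : ℝ) ^ (2 - α)))
      (Set.Icc 0 1)) ∧
    (α < 1 → MonotoneOn
      (fun c : ℝ => 1 + c * ((2 : ℝ) ^ (1 - α) - 1) + c ^ 2 * ((2 : ℝ) ^ (1 - α) - 1)
        + c ^ 3 * ((3 : ℝ) ^ (1 - α) + 1 - (2 : ℝ) ^ (2 - α)))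
      (Set.Icc 0 1)) := by
  have h2pos : (0:ℝ) < 2 := by norm_num
  have h2 : (2:ℝ) ^ (1 - α) = 2 * ((2:ℝ)⁻¹ ^ α) := by
    rw [show (1:ℝ) - α = 1 + (-α) by ring, Real.rpow_add h2pos, Real.rpow_one,
      Real.rpow_neg (by norm_num : (0:ℝ) ≤ 2), ← Real.inv_rpow (by norm_num : (0:ℝ) ≤ 2)]
  have h3 : (3:ℝ) ^ (1 - α) = 3 * ((3:ℝ)⁻¹ ^ α) := by
    rw [show (1:ℝ) - α = 1 + (-α) by ring, Real.rpow_add (by norm_num : (0:ℝ) < 3),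
      Real.rpow_one, Real.rpow_neg (by norm_num : (0:ℝ) ≤ 3),
      ← Real.inv_rpow (by norm_num : (0:ℝ) ≤ 3)]
  have h4 : (2:ℝ) ^ (2 - α) = 4 * ((2:ℝ)⁻¹ ^ α) := by
    rw [show (2:ℝ) - α = 1 + (1 - α) by ring, Real.rpow_add h2pos, Real.rpow_one, h2]; ring
  have h4' : (2:ℝ) ^ (2 - α) = 2 * (2:ℝ) ^ (1 - α) := by
    rw [show (2:ℝ) - α = 1 + (1 - α) by ring, Real.rpow_add h2pos, Real.rpow_one]
  refine ⟨?_, ?_, ?_⟩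
  · -- the integral computation
    have hT : ∀ i j, (μ (E i j ⁻¹' {true})).toReal
        = ![![1, b, b ^ 2], ![b ^ 2, 1, b], ![b, b ^ 2, 1]] i j := by
      intro i j
      rw [show (E i j ⁻¹' {true}) = {ω | E i j ω = true} by ext ω; simp]
      exact hp i j
    have hF : ∀ i j, (μ (E i j ⁻¹' {false})).toReal
        = 1 - ![![1, b, b ^ 2], ![b ^ 2, 1, b], ![b, b ^ 2, 1]] i j := by
      intro i j
      have hc : (E i j ⁻¹' {false}) = (E i j ⁻¹' {true})ᶜ := by
        ext ω; cases h : E i j ω <;> simp [h]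
      rw [hc, prob_compl_eq_one_sub (hEmeas i j (measurableSet_singleton _)),
        ENNReal.toReal_sub_of_le prob_le_one ENNReal.one_ne_top, ENNReal.toReal_one, hT]
    have hcol : ∀ j : Fin 3, ∫ ω, (if E 0 j ω then ((deg ω j : ℝ))⁻¹ else 0) ^ α ∂μ
        = ∑ p : Bool × Bool × Bool,
            (fun x y z : Bool => (if x then
              ((((if x then 1 else 0) + (if y then 1 else 0) + (if z then 1 else 0) : ℕ)) : ℝ)⁻¹
              else 0) ^ α) p.1 p.2.1 p.2.2 *
            ((μ (E 0 j ⁻¹' {p.1})).toReal * (μ (E 1 j ⁻¹' {p.2.1})).toReal *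
              (μ (E 2 j ⁻¹' {p.2.2})).toReal) := by
      intro j
      rw [show (fun ω => (if E 0 j ω then ((deg ω j : ℝ))⁻¹ else 0) ^ α)
          = fun ω => (fun x y z : Bool => (if x then
              ((((if x then 1 else 0) + (if y then 1 else 0) + (if z then 1 else 0) : ℕ)) : ℝ)⁻¹
              else 0) ^ α) (E 0 j ω) (E 1 j ω) (E 2 j ω) from
        funext fun ω => by simp only [hdeg ω j, Fin.sum_univ_three]]
      exact exp_triple μ (E 0 j) (E 1 j) (E 2 j) (hEmeas 0 j) (hEmeas 1 j) (hEmeas 2 j)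
        (meas_inter3 hindep j) (fun x y z => (if x then
          ((((if x then 1 else 0) + (if y then 1 else 0) + (if z then 1 else 0) : ℕ)) : ℝ)⁻¹
          else 0) ^ α)
    rw [Fin.sum_univ_three, hcol 0, hcol 1, hcol 2]
    simp only [Fintype.sum_prod_type, Fintype.sum_bool, hT, hF, if_true, if_false,
      Bool.false_eq_true, Matrix.cons_val_zero, Matrix.cons_val_one, Matrix.head_cons,
      Matrix.cons_val_two, Matrix.tail_cons, Matrix.head_fin_const]
    norm_num [Real.zero_rpow hα.ne', Real.one_rpow]
    rw [h2, h3, h4]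
    ring
  · -- antitone for α > 1
    intro hα1 c hc d hd hcd
    simp only
    rw [h4']
    have hu1 : (2:ℝ) ^ (1 - α) ≤ 1 :=
      Real.rpow_le_one_of_one_le_of_nonpos (by norm_num) (by linarith)
    have hvu : (3:ℝ) ^ (1 - α) ≤ (2:ℝ) ^ (1 - α) :=
      Real.rpow_le_rpow_of_nonpos h2pos (by norm_num) (by linarith)
    obtain ⟨hc0, hc1⟩ := hc; obtain ⟨hd0, hd1⟩ := hd
    nlinarith [mul_nonneg (mul_nonneg (sub_nonneg.2 hcd) (sub_nonneg.2 hu1))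
        (sub_nonneg.2 (show c^2 + c*d + d^2 ≤ 1 + c + d by nlinarith)),
      mul_nonneg (mul_nonneg (sub_nonneg.2 hcd)
        (show (0:ℝ) ≤ c^2 + c*d + d^2 by positivity)) (sub_nonneg.2 hvu)]
  · -- monotone for α < 1
    intro hα1 c hc d hd hcd
    simp only
    rw [h4']
    have hu1 : (1:ℝ) ≤ (2:ℝ) ^ (1 - α) :=
      Real.one_le_rpow (by norm_num) (by linarith)
    have hvu : (2:ℝ) ^ (1 - α) ≤ (3:ℝ) ^ (1 - α) :=
      Real.rpow_le_rpow (by norm_num) (by norm_num) (by linarith)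
    obtain ⟨hc0, hc1⟩ := hc; obtain ⟨hd0, hd1⟩ := hd
    nlinarith [mul_nonneg (mul_nonneg (sub_nonneg.2 hcd) (sub_nonneg.2 hu1))
        (sub_nonneg.2 (show c^2 + c*d + d^2 ≤ 1 + c + d by nlinarith)),
      mul_nonneg (mul_nonneg (sub_nonneg.2 hcd)
        (show (0:ℝ) ≤ c^2 + c*d + d^2 by positivity)) (sub_nonneg.2 hvu)]
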